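/- Let K be a field and f a multilinear polynomial such that f is not a polynomial identity of UT₂(K) but the sum of its coefficients is zero. Then the image of f on UT₂(K) equals J, the one-dimensional space of strictly upper triangular 2×2 matrices. -/

import Mathlib

open Matrix

/-- Upper triangular n×n matrices (as a set). -/
def UTset (n : ℕ) (K : Type*) [Ring K] : Set (Matrix (Fin n) (Fin n) K) :=
  {A | ∀ i j : Fin n, j < i → A i j = 0}

/-- The k-th power Jᵏ of the strictly upper triangular ideal:
matrices whose (i,j) entry vanishes unless j ≥ i + k. -/
def Jset (n : ℕ) (K : Type*) [Ring K] (k : ℕ) : Set (Matrix (Fin n) (Fin n) K) :=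
  {A | ∀ i j : Fin n, (j : ℕ) < (i : ℕ) + k → A i j = 0}

/-- Evaluation of the multilinear polynomial ∑_σ α_σ x_{σ(1)}⋯x_{σ(n)}. -/
def mlEval {K A : Type*} [CommSemiring K] [Ring A] [Algebra K A] {n : ℕ}
    (α : Equiv.Perm (Fin n) → K) (a : Fin n → A) : A :=
  ∑ σ : Equiv.Perm (Fin n), α σ • (List.ofFn fun i => a (σ i)).prod

/-- Image of a multilinear polynomial on a subset S of an algebra. -/
def mlImage {K A : Type*} [CommSemiring K] [Ring A] [Algebra K A] {n : ℕ}
    (α : Equiv.Perm (Fin n) → K) (S : Set A) : Set A :=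
  {x | ∃ a : Fin n → A, (∀ i, a i ∈ S) ∧ x = mlEval α a}

section Aux

variable {K : Type*} [Field K]

lemma UT_one : (1 : Matrix (Fin 2) (Fin 2) K) ∈ UTset 2 K := by
  intro i j h
  exact Matrix.one_apply_ne h.ne'

lemma UT_mul {M N : Matrix (Fin 2) (Fin 2) K} (hM : M ∈ UTset 2 K) (hN : N ∈ UTset 2 K) :
    M * N ∈ UTset 2 K := by
  intro i j h
  have h10M := hM 1 0 (by decide)
  have h10N := hN 1 0 (by decide)
  fin_cases i <;> fin_cases j <;>
    first
      | exact absurd h (by decide)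
      | simp [Matrix.mul_apply, Fin.sum_univ_two, h10M, h10N]

lemma UT_mul_diag {M N : Matrix (Fin 2) (Fin 2) K} (hM : M ∈ UTset 2 K)
    (hN : N ∈ UTset 2 K) (i : Fin 2) : (M * N) i i = M i i * N i i := by
  have h10M := hM 1 0 (by decide)
  have h10N := hN 1 0 (by decide)
  fin_cases i <;> simp [Matrix.mul_apply, Fin.sum_univ_two, h10M, h10N]

lemma UT_list_prod (l : List (Matrix (Fin 2) (Fin 2) K)) (h : ∀ M ∈ l, M ∈ UTset 2 K) :
    l.prod ∈ UTset 2 K ∧ ∀ i, l.prod i i = (l.map (fun M => M i i)).prod := by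
  induction l with
  | nil =>
    refine ⟨UT_one, fun i => ?_⟩
    simp [Matrix.one_apply_eq]
  | cons M l ih =>
    have hM : M ∈ UTset 2 K := h M (by simp)
    have hl : ∀ N ∈ l, N ∈ UTset 2 K := fun N hN => h N (by simp [hN])
    obtain ⟨hp, hd⟩ := ih hl
    refine ⟨?_, fun i => ?_⟩
    · simpa [List.prod_cons] using UT_mul hM hp
    · rw [List.prod_cons, UT_mul_diag hM hp, hd, List.map_cons, List.prod_cons]

lemma prod_update_smul {A : Type*} [CommSemiring K] [Ring A] [Algebra K A] :
    ∀ (n : ℕ) (g : Fin n → A) (j : Fin n) (c : K),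
      (List.ofFn (Function.update g j (c • g j))).prod = c • (List.ofFn g).prod := by
  intro n
  induction n with
  | zero => intro g j c; exact j.elim0
  | succ n ih =>
    intro g j c
    rcases Fin.eq_zero_or_eq_succ j with rfl | ⟨j', rfl⟩
    · rw [List.ofFn_succ, List.ofFn_succ]
      have htail : (fun i : Fin n => Function.update g 0 (c • g 0) i.succ)
          = fun i => g i.succ := by
        funext i; exact Function.update_of_ne (Fin.succ_ne_zero i) _ _
      rw [Function.update_self, htail, List.prod_cons, List.prod_cons, smul_mul_assoc]
    · rw [List.ofFn_succ, List.ofFn_succ]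
      have h0 : Function.update g j'.succ (c • g j'.succ) 0 = g 0 :=
        Function.update_of_ne (Fin.succ_ne_zero j').symm _ _
      have htail : (fun i : Fin n => Function.update g j'.succ (c • g j'.succ) i.succ)
          = Function.update (fun i => g i.succ) j' (c • (fun i => g i.succ) j') := by
        funext i
        by_cases hij : i = j'
        · subst hij; simp
        · rw [Function.update_of_ne (fun hh => hij (Fin.succ_injective _ hh)),
            Function.update_of_ne hij]
      rw [h0, htail, List.prod_cons, List.prod_cons, ih, mul_smul_comm]

lemma mlEval_update_smul {A : Type*} [Ring A] [Algebra K A] {n : ℕ}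
    (α : Equiv.Perm (Fin n) → K) (a : Fin n → A) (i₀ : Fin n) (c : K) :
    mlEval α (Function.update a i₀ (c • a i₀)) = c • mlEval α a := by
  unfold mlEval
  rw [Finset.smul_sum]
  refine Finset.sum_congr rfl fun σ _ => ?_
  have key : (fun i => Function.update a i₀ (c • a i₀) (σ i))
      = Function.update (fun i => a (σ i)) (σ⁻¹ i₀)
          (c • (fun i => a (σ i)) (σ⁻¹ i₀)) := by
    funext i
    by_cases h : i = σ⁻¹ i₀
    · subst h
      rw [Equiv.Perm.coe_inv, Equiv.apply_symm_apply, Function.update_self, Function.update_self]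
      simp only [Equiv.apply_symm_apply]
    · have h' : σ i ≠ i₀ := fun hh => h (by rw [← hh]; simp)
      rw [Function.update_of_ne h', Function.update_of_ne h]
  rw [key, prod_update_smul, smul_comm]

end Aux

theorem stmt_6 {K : Type*} [Field K] {n : ℕ}
    (α : Equiv.Perm (Fin n) → K) (hα : ∑ σ : Equiv.Perm (Fin n), α σ = 0)
    (hni : ∃ a : Fin n → Matrix (Fin 2) (Fin 2) K,
      (∀ i, a i ∈ UTset 2 K) ∧ mlEval α a ≠ 0) :
    mlImage α (UTset 2 K) = Jset 2 K 1 := by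
  -- Forward inclusion: every value of f on UT₂ is strictly upper triangular.
  have fwd : mlImage α (UTset 2 K) ⊆ Jset 2 K 1 := by
    rintro x ⟨a, ha, rfl⟩
    intro i j hij
    have hentry : mlEval α a i j
        = ∑ σ : Equiv.Perm (Fin n), α σ * (List.ofFn fun k => a (σ k)).prod i j := by
      simp [mlEval, Matrix.sum_apply]
    have hP : ∀ σ : Equiv.Perm (Fin n),
        (List.ofFn fun k => a (σ k)).prod ∈ UTset 2 K ∧
        ∀ i, (List.ofFn fun k => a (σ k)).prod i i
          = ((List.ofFn fun k => a (σ k)).map (fun M => M i i)).prod := by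
      intro σ
      refine UT_list_prod _ ?_
      intro M hM
      rw [List.mem_ofFn] at hM
      obtain ⟨k, rfl⟩ := hM
      exact ha (σ k)
    by_cases hd : i = j
    · subst hd
      rw [hentry]
      have : ∀ σ : Equiv.Perm (Fin n),
          (List.ofFn fun k => a (σ k)).prod i i = ∏ k : Fin n, a k i i := by
        intro σ
        rw [(hP σ).2 i, List.map_ofFn, List.prod_ofFn]
        exact Equiv.prod_comp σ (fun k => a k i i)
      simp only [this]
      rw [← Finset.sum_mul, hα, zero_mul]
    · have hji : j < i := by
        rcases lt_trichotomy j i with h | h | h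
        · exact h
        · exact absurd h.symm hd
        · exfalso; omega
      rw [hentry]
      have : ∀ σ : Equiv.Perm (Fin n), (List.ofFn fun k => a (σ k)).prod i j = 0 :=
        fun σ => (hP σ).1 i j hji
      simp [this]
  refine le_antisymm fwd ?_
  -- Reverse inclusion.
  obtain ⟨a, ha, hne⟩ := hni
  rcases Nat.eq_zero_or_pos n with hn | hn
  · exfalso
    apply hne
    subst hn
    have : mlEval α a = ∑ σ : Equiv.Perm (Fin 0), α σ • (1 : Matrix (Fin 2) (Fin 2) K) := by
      simp [mlEval]
    rw [this, ← Finset.sum_smul, hα, zero_smul]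
  intro x hx
  set b := mlEval α a with hb
  have hbJ : b ∈ Jset 2 K 1 := fwd ⟨a, ha, rfl⟩
  have hc : b 0 1 ≠ 0 := by
    intro hc0
    apply hne
    ext i j
    fin_cases i <;> fin_cases j <;>
      simp only [Fin.zero_eta, Fin.mk_one, Matrix.zero_apply]
    · exact hbJ 0 0 (by decide)
    · exact hc0
    · exact hbJ 1 0 (by decide)
    · exact hbJ 1 1 (by decide)
  set c' : K := x 0 1 / b 0 1 with hc'
  set i₀ : Fin n := ⟨0, hn⟩
  refine ⟨Function.update a i₀ (c' • a i₀), ?_, ?_⟩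
  · intro i
    by_cases h : i = i₀
    · subst h
      rw [Function.update_self]
      intro p q hpq
      simp [Matrix.smul_apply, ha i₀ p q hpq]
    · rw [Function.update_of_ne h]
      exact ha i
  · rw [mlEval_update_smul, ← hb]
    ext i j
    fin_cases i <;> fin_cases j <;>
      simp only [Fin.zero_eta, Fin.mk_one, Matrix.smul_apply, smul_eq_mul]
    · rw [hx 0 0 (by decide), hbJ 0 0 (by decide), mul_zero]
    · rw [hc', div_mul_cancel₀ _ hc]
    · rw [hx 1 0 (by decide), hbJ 1 0 (by decide), mul_zero]
    · rw [hx 1 1 (by decide), hbJ 1 1 (by decide), mul_zero]
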